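/- Every bimatrix game (with payoffs in [0,1]) that has a Nash equilibrium of value v admits a 1/2-approximate Nash equilibrium of value at least v in which one of the two players plays a pure strategy. -/

import Mathlib

/-- The payoff of a player with payoff matrix `M` under mixed strategies `x, y`. -/
def payoff7 {n : ℕ} (M : Fin n → Fin n → ℝ) (x y : Fin n → ℝ) : ℝ :=
  ∑ i, ∑ j, x i * M i j * y j

/-- `x` is a mixed strategy. -/
def IsMixed7 {n : ℕ} (x : Fin n → ℝ) : Prop :=
  (∀ i, 0 ≤ x i) ∧ ∑ i, x i = 1

/-- The pure strategy on the `i`-th action. -/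
def pure7 {n : ℕ} (i : Fin n) : Fin n → ℝ :=
  fun k => if k = i then 1 else 0

/-- `(x, y)` is an `ε`-approximate Nash equilibrium of the bimatrix game `(Mr, Mc)`. -/
def IsEpsEq7 {n : ℕ} (Mr Mc : Fin n → Fin n → ℝ) (ε : ℝ) (x y : Fin n → ℝ) : Prop :=
  (∀ i, payoff7 Mr (pure7 i) y ≤ payoff7 Mr x y + ε) ∧
  (∀ j, payoff7 Mc x (pure7 j) ≤ payoff7 Mc x y + ε)

/-- The value of a strategy pair: the average of the two players' payoffs. -/
noncomputable def value7 {n : ℕ} (Mr Mc : Fin n → Fin n → ℝ) (x y : Fin n → ℝ) : ℝ :=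
  (payoff7 Mr x y + payoff7 Mc x y) / 2

lemma sum_pure7 {n : ℕ} (i : Fin n) : ∑ k, pure7 i k = 1 := by
  simp [pure7]

lemma pure7_mixed {n : ℕ} (i : Fin n) : IsMixed7 (pure7 i) := by
  refine ⟨fun k => ?_, sum_pure7 i⟩
  unfold pure7; split <;> norm_num

lemma payoff7_pure_right {n : ℕ} (M : Fin n → Fin n → ℝ) (x : Fin n → ℝ) (j : Fin n) :
    payoff7 M x (pure7 j) = ∑ i, x i * M i j := by
  unfold payoff7 pure7
  refine Finset.sum_congr rfl fun i _ => ?_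
  rw [Finset.sum_eq_single j] <;> simp +contextual

lemma payoff7_pure_left {n : ℕ} (M : Fin n → Fin n → ℝ) (i : Fin n) (y : Fin n → ℝ) :
    payoff7 M (pure7 i) y = ∑ j, M i j * y j := by
  unfold payoff7 pure7
  rw [Finset.sum_eq_single i] <;> simp +contextual

lemma payoff7_pure_pure {n : ℕ} (M : Fin n → Fin n → ℝ) (i j : Fin n) :
    payoff7 M (pure7 i) (pure7 j) = M i j := by
  rw [payoff7_pure_left]
  unfold pure7
  rw [Finset.sum_eq_single j] <;> simp +contextual

lemma payoff7_expand_col {n : ℕ} (M : Fin n → Fin n → ℝ) (x y : Fin n → ℝ) :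
    payoff7 M x y = ∑ j, payoff7 M x (pure7 j) * y j := by
  simp only [payoff7_pure_right]
  unfold payoff7
  rw [Finset.sum_comm]
  exact Finset.sum_congr rfl fun j _ => (Finset.sum_mul _ _ _).symm

lemma payoff7_expand_row {n : ℕ} (M : Fin n → Fin n → ℝ) (x y : Fin n → ℝ) :
    payoff7 M x y = ∑ i, x i * payoff7 M (pure7 i) y := by
  simp only [payoff7_pure_left]
  unfold payoff7
  refine Finset.sum_congr rfl fun i _ => ?_
  rw [Finset.mul_sum]
  exact Finset.sum_congr rfl fun j _ => by ring

lemma payoff7_avg_left {n : ℕ} (M : Fin n → Fin n → ℝ) (x w z : Fin n → ℝ) :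
    payoff7 M (fun i => (x i + w i) / 2) z = (payoff7 M x z + payoff7 M w z) / 2 := by
  unfold payoff7
  rw [← Finset.sum_add_distrib, Finset.sum_div]
  refine Finset.sum_congr rfl fun i _ => ?_
  rw [← Finset.sum_add_distrib, Finset.sum_div]
  refine Finset.sum_congr rfl fun j _ => ?_
  ring

lemma payoff7_mem_Icc {n : ℕ} {M : Fin n → Fin n → ℝ} (hM : ∀ i j, M i j ∈ Set.Icc (0:ℝ) 1)
    {x y : Fin n → ℝ} (hx : IsMixed7 x) (hy : IsMixed7 y) :
    payoff7 M x y ∈ Set.Icc (0:ℝ) 1 := by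
  constructor
  · refine Finset.sum_nonneg fun i _ => Finset.sum_nonneg fun j _ => ?_
    have h := hM i j
    have := hx.1 i; have := hy.1 j
    have : 0 ≤ x i * M i j := mul_nonneg ‹0 ≤ x i› h.1
    exact mul_nonneg this (hy.1 j)
  · calc payoff7 M x y ≤ ∑ i, ∑ j, x i * y j := by
          refine Finset.sum_le_sum fun i _ => Finset.sum_le_sum fun j _ => ?_
          have h := hM i j
          have hxi := hx.1 i; have hyj := hy.1 j
          calc x i * M i j * y j ≤ x i * 1 * y j := by
                apply mul_le_mul_of_nonneg_right _ hyj
                exact mul_le_mul_of_nonneg_left h.2 hxi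
            _ = x i * y j := by ring
    _ = (∑ i, x i) * (∑ j, y j) := by rw [Finset.sum_mul_sum]
    _ = 1 := by rw [hx.2, hy.2, mul_one]

theorem stmt_7 {n : ℕ} (hn : 0 < n) (Mr Mc : Fin n → Fin n → ℝ)
    (hMr : ∀ i j, Mr i j ∈ Set.Icc (0:ℝ) 1) (hMc : ∀ i j, Mc i j ∈ Set.Icc (0:ℝ) 1)
    (x y : Fin n → ℝ) (hx : IsMixed7 x) (hy : IsMixed7 y)
    (hNash : IsEpsEq7 Mr Mc 0 x y) :
    ∃ x' y' : Fin n → ℝ, IsMixed7 x' ∧ IsMixed7 y' ∧ IsEpsEq7 Mr Mc (1/2) x' y' ∧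
      value7 Mr Mc x' y' ≥ value7 Mr Mc x y ∧
      ((∃ i, x' = pure7 i) ∨ (∃ j, y' = pure7 j)) := by
  obtain ⟨hNr, hNc⟩ := hNash
  simp only [add_zero] at hNr hNc
  set R := payoff7 Mr x y with hR
  set C := payoff7 Mc x y with hC
  -- choose j0 in support of y maximizing payoff7 Mr x (pure7 ·)
  have hSne : (Finset.univ.filter (fun j => y j ≠ 0)).Nonempty := by
    by_contra h
    rw [Finset.not_nonempty_iff_eq_empty, Finset.filter_eq_empty_iff] at h
    have : ∑ j, y j = 0 := Finset.sum_eq_zero fun j _ => by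
      have := h (Finset.mem_univ j); simpa using this
    rw [hy.2] at this; norm_num at this
  obtain ⟨j0, hj0S, hj0max⟩ :=
    Finset.exists_max_image _ (fun j => payoff7 Mr x (pure7 j)) hSne
  have hyj0 : y j0 ≠ 0 := (Finset.mem_filter.mp hj0S).2
  have hPj0 : R ≤ payoff7 Mr x (pure7 j0) := by
    have h1 : R = ∑ j, payoff7 Mr x (pure7 j) * y j := payoff7_expand_col Mr x y
    have h2 : ∑ j, payoff7 Mr x (pure7 j) * y j ≤ ∑ j, payoff7 Mr x (pure7 j0) * y j := by
      refine Finset.sum_le_sum fun j _ => ?_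
      rcases eq_or_ne (y j) 0 with h | h
      · simp [h]
      · exact mul_le_mul_of_nonneg_right
          (hj0max j (Finset.mem_filter.mpr ⟨Finset.mem_univ j, h⟩)) (hy.1 j)
    calc R = ∑ j, payoff7 Mr x (pure7 j) * y j := h1
      _ ≤ ∑ j, payoff7 Mr x (pure7 j0) * y j := h2
      _ = payoff7 Mr x (pure7 j0) := by rw [← Finset.mul_sum, hy.2, mul_one]
  have hQj0 : payoff7 Mc x (pure7 j0) = C := by
    have h0 : ∑ j, y j * (C - payoff7 Mc x (pure7 j)) = 0 := by
      have h1 : C = ∑ j, payoff7 Mc x (pure7 j) * y j := payoff7_expand_col Mc x y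
      have : ∑ j, y j * (C - payoff7 Mc x (pure7 j))
          = (∑ j, y j) * C - ∑ j, payoff7 Mc x (pure7 j) * y j := by
        rw [Finset.sum_mul, ← Finset.sum_sub_distrib]
        exact Finset.sum_congr rfl fun j _ => by ring
      rw [this, hy.2, one_mul, ← h1]; ring
    have hnn : ∀ j ∈ Finset.univ, 0 ≤ y j * (C - payoff7 Mc x (pure7 j)) := fun j _ =>
      mul_nonneg (hy.1 j) (by linarith [hNc j])
    have := (Finset.sum_eq_zero_iff_of_nonneg hnn).mp h0 j0 (Finset.mem_univ j0)
    rcases mul_eq_zero.mp this with h | h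
    · exact absurd h hyj0
    · linarith
  -- choose i0 in support of x maximizing payoff7 Mc (pure7 ·) y
  have hTne : (Finset.univ.filter (fun i => x i ≠ 0)).Nonempty := by
    by_contra h
    rw [Finset.not_nonempty_iff_eq_empty, Finset.filter_eq_empty_iff] at h
    have : ∑ i, x i = 0 := Finset.sum_eq_zero fun i _ => by
      have := h (Finset.mem_univ i); simpa using this
    rw [hx.2] at this; norm_num at this
  obtain ⟨i0, hi0T, hi0max⟩ :=
    Finset.exists_max_image _ (fun i => payoff7 Mc (pure7 i) y) hTne
  have hxi0 : x i0 ≠ 0 := (Finset.mem_filter.mp hi0T).2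
  have hGi0 : C ≤ payoff7 Mc (pure7 i0) y := by
    have h1 : C = ∑ i, x i * payoff7 Mc (pure7 i) y := payoff7_expand_row Mc x y
    have h2 : ∑ i, x i * payoff7 Mc (pure7 i) y ≤ ∑ i, x i * payoff7 Mc (pure7 i0) y := by
      refine Finset.sum_le_sum fun i _ => ?_
      rcases eq_or_ne (x i) 0 with h | h
      · simp [h]
      · exact mul_le_mul_of_nonneg_left
          (hi0max i (Finset.mem_filter.mpr ⟨Finset.mem_univ i, h⟩)) (hx.1 i)
    calc C = ∑ i, x i * payoff7 Mc (pure7 i) y := h1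
      _ ≤ ∑ i, x i * payoff7 Mc (pure7 i0) y := h2
      _ = payoff7 Mc (pure7 i0) y := by rw [← Finset.sum_mul, hx.2, one_mul]
  have hFi0 : payoff7 Mr (pure7 i0) y = R := by
    have h0 : ∑ i, x i * (R - payoff7 Mr (pure7 i) y) = 0 := by
      have h1 : R = ∑ i, x i * payoff7 Mr (pure7 i) y := payoff7_expand_row Mr x y
      have : ∑ i, x i * (R - payoff7 Mr (pure7 i) y)
          = (∑ i, x i) * R - ∑ i, x i * payoff7 Mr (pure7 i) y := by
        rw [Finset.sum_mul, ← Finset.sum_sub_distrib]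
        exact Finset.sum_congr rfl fun i _ => by ring
      rw [this, hx.2, one_mul, ← h1]; ring
    have hnn : ∀ i ∈ Finset.univ, 0 ≤ x i * (R - payoff7 Mr (pure7 i) y) := fun i _ =>
      mul_nonneg (hx.1 i) (by linarith [hNr i])
    have := (Finset.sum_eq_zero_iff_of_nonneg hnn).mp h0 i0 (Finset.mem_univ i0)
    rcases mul_eq_zero.mp this with h | h
    · exact absurd h hxi0
    · linarith
  -- b : best pure response of the row player to pure7 j0
  obtain ⟨b, -, hbmax⟩ := Finset.exists_max_image Finset.univ
    (fun i => payoff7 Mr (pure7 i) (pure7 j0)) ⟨⟨0, hn⟩, Finset.mem_univ _⟩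
  set m := payoff7 Mr (pure7 b) (pure7 j0) with hm
  have hm1 : m ≤ 1 := (payoff7_mem_Icc hMr (pure7_mixed b) (pure7_mixed j0)).2
  have hPj0nn : 0 ≤ payoff7 Mr x (pure7 j0) := (payoff7_mem_Icc hMr hx (pure7_mixed j0)).1
  by_cases hA : m ≤ payoff7 Mr x (pure7 j0) + 1/2
  · -- (x, pure7 j0) works
    refine ⟨x, pure7 j0, hx, pure7_mixed j0, ⟨?_, ?_⟩, ?_, Or.inr ⟨j0, rfl⟩⟩
    · intro i
      exact le_trans (hbmax i (Finset.mem_univ i)) hA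
    · intro j
      rw [hQj0]
      linarith [hNc j]
    · unfold value7
      rw [hQj0, ← hR, ← hC]
      linarith
  by_cases hB : ∀ j, payoff7 Mc (pure7 i0) (pure7 j) ≤ payoff7 Mc (pure7 i0) y + 1/2
  · -- (pure7 i0, y) works
    refine ⟨pure7 i0, y, pure7_mixed i0, hy, ⟨?_, hB⟩, ?_, Or.inl ⟨i0, rfl⟩⟩
    · intro i
      rw [hFi0]
      linarith [hNr i]
    · unfold value7
      rw [hFi0, ← hR, ← hC]
      linarith
  -- Case C: mix
  push_neg at hA hB
  obtain ⟨j1, hj1⟩ := hB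
  have hGle1 : payoff7 Mc (pure7 i0) (pure7 j1) ≤ 1 :=
    (payoff7_mem_Icc hMc (pure7_mixed i0) (pure7_mixed j1)).2
  have hClt : C < 1/2 := by linarith
  set x' : Fin n → ℝ := fun i => (x i + pure7 b i) / 2 with hx'
  have hx'mix : IsMixed7 x' := by
    constructor
    · intro i
      have := hx.1 i
      have := (pure7_mixed b).1 i
      positivity
    · rw [hx']
      simp only
      rw [← Finset.sum_div, Finset.sum_add_distrib, hx.2, sum_pure7]
      norm_num
  have hsplit : ∀ z, payoff7 Mc x' z = (payoff7 Mc x z + payoff7 Mc (pure7 b) z) / 2 :=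
    fun z => payoff7_avg_left Mc x (pure7 b) z
  have hsplitr : ∀ z, payoff7 Mr x' z = (payoff7 Mr x z + payoff7 Mr (pure7 b) z) / 2 :=
    fun z => payoff7_avg_left Mr x (pure7 b) z
  have hQbnn : 0 ≤ payoff7 Mc (pure7 b) (pure7 j0) :=
    (payoff7_mem_Icc hMc (pure7_mixed b) (pure7_mixed j0)).1
  refine ⟨x', pure7 j0, hx'mix, pure7_mixed j0, ⟨?_, ?_⟩, ?_, Or.inr ⟨j0, rfl⟩⟩
  · intro i
    rw [hsplitr]
    have := hbmax i (Finset.mem_univ i)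
    try simp only at this ⊢
    rw [← hm]
    linarith
  · intro j
    rw [hsplit, hsplit]
    have h1 : payoff7 Mc x (pure7 j) ≤ C := hNc j
    have h2 : payoff7 Mc (pure7 b) (pure7 j) ≤ 1 :=
      (payoff7_mem_Icc hMc (pure7_mixed b) (pure7_mixed j)).2
    rw [hQj0]
    linarith
  · unfold value7
    rw [hsplit, hsplitr, hQj0, ← hR, ← hC, ← hm]
    linarith
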